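/- arXiv:1711.08409 — 2 statements merged into one kernel-verified Lean document; each statement's English description precedes it below -/
import Mathlib

section
/- A pseudo-hoop A is simple (i.e., {1} is its unique proper filter) if and only if for all x, y ∈ A with x ≠ 1, there exists n ∈ ℕ such that x →ⁿ y = 1, where x →⁰ y = y and x →ⁿ y = x → (x →ⁿ⁻¹ y). -/
universe u v

class PseudoHoop (A : Type u) extends One A, Mul A where
  rimp : A → A → A
  limp : A → A → A
  mul_one' : ∀ x : A, x * 1 = x
  one_mul' : ∀ x : A, 1 * x = x
  rimp_self : ∀ x : A, rimp x x = 1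
  limp_self : ∀ x : A, limp x x = 1
  mul_rimp : ∀ x y z : A, rimp (x * y) z = rimp x (rimp y z)
  mul_limp : ∀ x y z : A, limp (x * y) z = limp y (limp x z)
  div₁ : ∀ x y : A, (rimp x y) * x = (rimp y x) * y
  div₂ : ∀ x y : A, (rimp x y) * x = x * (limp x y)
  div₃ : ∀ x y : A, x * (limp x y) = y * (limp y x)

namespace PseudoHoop

/-- The order on a pseudo-hoop: `x ≤ y` iff `x → y = 1`. -/
def ple {A : Type u} [PseudoHoop A] (x y : A) : Prop := rimp x y = 1

/-- The meet `x ∧ y = (x → y) ⊙ x`. -/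
def meet {A : Type u} [PseudoHoop A] (x y : A) : A := (rimp x y) * x

/-- `x ∨₁ y = (x → y) ⇝ y`. -/
def join₁ {A : Type u} [PseudoHoop A] (x y : A) : A := limp (rimp x y) y

/-- `x ∨₂ y = (x ⇝ y) → y`. -/
def join₂ {A : Type u} [PseudoHoop A] (x y : A) : A := rimp (limp x y) y

/-- Iterated implication: `x →⁰ y = y`, `x →ⁿ⁺¹ y = x → (x →ⁿ y)`. -/
def rimpPow {A : Type u} [PseudoHoop A] (x : A) : ℕ → A → A
  | 0, y => y
  | n + 1, y => rimp x (rimpPow x n y)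

/-- A filter of a pseudo-hoop. -/
structure IsFilter {A : Type u} [PseudoHoop A] (F : Set A) : Prop where
  nonempty : F.Nonempty
  mul_mem : ∀ {x y : A}, x ∈ F → y ∈ F → x * y ∈ F
  upward : ∀ {x y : A}, x ∈ F → ple x y → y ∈ F

/-- A normal filter: `x → y ∈ F` iff `x ⇝ y ∈ F`. -/
def IsNormalFilter {A : Type u} [PseudoHoop A] (F : Set A) : Prop :=
  IsFilter F ∧ ∀ x y : A, rimp x y ∈ F ↔ limp x y ∈ F

def IsProper {A : Type u} [PseudoHoop A] (F : Set A) : Prop := F ≠ Set.univ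

/-- A pseudo-hoop is simple if `{1}` is its unique proper filter. -/
def IsSimple (A : Type u) [PseudoHoop A] : Prop :=
  ∀ F : Set A, IsFilter F → IsProper F → F = {1}

/-- A pseudo-hoop is Wajsberg if `x ∨₁ y = y ∨₁ x` and `x ∨₂ y = y ∨₂ x`. -/
def IsWajsberg (A : Type u) [PseudoHoop A] : Prop :=
  ∀ x y : A, join₁ x y = join₁ y x ∧ join₂ x y = join₂ y x

/-- A fantastic filter. -/
def IsFantasticFilter {A : Type u} [PseudoHoop A] (F : Set A) : Prop :=
  IsFilter F ∧ ∀ x y : A,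
    (rimp y x ∈ F → rimp (join₁ x y) x ∈ F) ∧
    (limp y x ∈ F → limp (join₂ x y) x ∈ F)

def IS₂ {A : Type u} [PseudoHoop A] (μ : A → A) : Prop :=
  ∀ x y : A, μ (x * y) = μ x * μ (limp x (x * y)) ∧
    μ (x * y) = μ (rimp y (x * y)) * μ y

def IS₃ {A : Type u} [PseudoHoop A] (μ : A → A) : Prop :=
  ∀ x y : A, μ (μ x * μ y) = μ x * μ y

def IS₄ {A : Type u} [PseudoHoop A] (μ : A → A) : Prop :=
  ∀ x y : A, μ (rimp (μ x) (μ y)) = rimp (μ x) (μ y) ∧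
    μ (limp (μ x) (μ y)) = limp (μ x) (μ y)

/-- Type I state operator. -/
def IsStateI {A : Type u} [PseudoHoop A] (μ : A → A) : Prop :=
  (∀ x y : A, μ (rimp x y) = rimp (μ (join₁ x y)) (μ y) ∧
      μ (limp x y) = limp (μ (join₂ x y)) (μ y)) ∧ IS₂ μ ∧ IS₃ μ ∧ IS₄ μ

/-- Type II state operator. -/
def IsStateII {A : Type u} [PseudoHoop A] (μ : A → A) : Prop :=
  (∀ x y : A, μ (rimp x y) = rimp (μ (join₁ y x)) (μ y) ∧
      μ (limp x y) = limp (μ (join₂ y x)) (μ y)) ∧ IS₂ μ ∧ IS₃ μ ∧ IS₄ μ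

/-- Type III state operator. -/
def IsStateIII {A : Type u} [PseudoHoop A] (μ : A → A) : Prop :=
  (∀ x y : A, μ (rimp x y) = rimp (μ x) (μ (meet x y)) ∧
      μ (limp x y) = limp (μ x) (μ (meet x y))) ∧ IS₂ μ ∧ IS₃ μ ∧ IS₄ μ

end PseudoHoop

open PseudoHoop

/-- A bounded pseudo-hoop: a pseudo-hoop with a least element `0`. -/
class BoundedPseudoHoop (A : Type u) extends PseudoHoop A, Zero A where
  zero_le : ∀ x : A, rimp 0 x = 1

namespace BoundedPseudoHoop

/-- `x⁻ = x → 0`. -/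
def negr {A : Type u} [BoundedPseudoHoop A] (x : A) : A := rimp x 0

/-- `x∼ = x ⇝ 0`. -/
def negl {A : Type u} [BoundedPseudoHoop A] (x : A) : A := limp x 0

/-- A bounded pseudo-hoop is good if `x⁻∼ = x∼⁻` for all `x`. -/
def IsGood (A : Type u) [BoundedPseudoHoop A] : Prop :=
  ∀ x : A, negl (negr x) = negr (negl x)

/-- A bounded pseudo-hoop is involutive if `x⁻∼ = x∼⁻ = x` for all `x`. -/
def IsInvolutive (A : Type u) [BoundedPseudoHoop A] : Prop :=
  ∀ x : A, negl (negr x) = x ∧ negr (negl x) = x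

/-- The set of dense elements. -/
def Den (A : Type u) [BoundedPseudoHoop A] : Set A :=
  {x : A | negl (negr x) = 1}

/-- An involutive filter: `x⁻∼ → x ∈ F` and `x∼⁻ ⇝ x ∈ F` for all `x`. -/
def IsInvolutiveFilter {A : Type u} [BoundedPseudoHoop A] (F : Set A) : Prop :=
  IsFilter F ∧ ∀ x : A, rimp (negl (negr x)) x ∈ F ∧ limp (negr (negl x)) x ∈ F

end BoundedPseudoHoop

open BoundedPseudoHoop

section Aux

open PseudoHoop

variable {A : Type u} [PseudoHoop A]

lemma ph_antisymm {x y : A} (h1 : rimp x y = 1) (h2 : rimp y x = 1) : x = y := by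
  have h := div₁ x y
  rw [h1, h2, one_mul', one_mul'] at h
  exact h

lemma ph_one_rimp (x : A) : rimp 1 x = x := by
  have h1 : rimp (rimp 1 x) x = 1 := by
    have h := mul_rimp (rimp 1 x) 1 x
    rw [mul_one', rimp_self] at h
    exact h
  have h2 : rimp x (rimp 1 x) = 1 := by
    have h := mul_rimp x 1 x
    rw [mul_one', rimp_self] at h
    exact h.symm
  exact ph_antisymm h1 h2

lemma ph_rimp_one (x : A) : rimp x 1 = 1 := by
  have hx : (rimp x 1) * x = x := by
    have h := div₁ x 1
    rw [ph_one_rimp, mul_one'] at h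
    exact h
  have h := mul_rimp (rimp x 1) x 1
  rw [hx, rimp_self] at h
  exact h

lemma ph_limp_one (x : A) : limp x 1 = 1 := by
  have hx : x * limp x 1 = x := by
    have h := div₂ x 1
    rw [ph_rimp_one, one_mul'] at h
    exact h.symm
  have h := mul_limp x (limp x 1) 1
  rw [hx, limp_self] at h
  exact h

lemma ph_limp_le_rimp {x y : A} (h : limp x y = 1) : rimp x y = 1 := by
  have hx : (rimp y x) * y = x := by
    have h3 := div₃ x y
    rw [h, mul_one'] at h3
    have h2 := div₂ y x
    rw [← h3] at h2
    exact h2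
  have hm := mul_rimp (rimp y x) y y
  rw [hx, rimp_self, ph_rimp_one] at hm
  exact hm

lemma ph_trans {x y z : A} (h1 : rimp x y = 1) (h2 : rimp y z = 1) : rimp x z = 1 := by
  have hx : rimp y x * y = x := by
    have h := div₁ x y
    rw [h1, one_mul'] at h
    exact h.symm
  have hm := mul_rimp (rimp y x) y z
  rw [hx, h2, ph_rimp_one] at hm
  exact hm

lemma ph_mul_le_left (x y : A) : rimp (x * y) x = 1 := by
  apply ph_limp_le_rimp
  have h := mul_limp x y x
  rw [limp_self, ph_limp_one] at h
  exact h

lemma ph_rimp_antitone {c d : A} (h : rimp c d = 1) (w : A) :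
    rimp (rimp d w) (rimp c w) = 1 := by
  have hc : rimp d c * d = c := by
    have h' := div₁ c d
    rw [h, one_mul'] at h'
    exact h'.symm
  have hcw : rimp c w = rimp (rimp d c) (rimp d w) := by
    conv_lhs => rw [← hc]
    exact mul_rimp _ _ _
  rw [hcw, ← mul_rimp]
  exact ph_mul_le_left _ _

lemma ph_mul_le_mul {a b c d : A} (h1 : rimp a b = 1) (h2 : rimp c d = 1) :
    rimp (a * c) (b * d) = 1 := by
  have hb : rimp b (rimp d (b * d)) = 1 := by
    rw [← mul_rimp]; exact rimp_self _
  have hbc : rimp b (rimp c (b * d)) = 1 := ph_trans hb (ph_rimp_antitone h2 (b * d))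
  rw [mul_rimp]
  exact ph_trans h1 hbc

lemma ph_ext {u v : A} (h : ∀ w, rimp u w = rimp v w) : u = v := by
  refine ph_antisymm ?_ ?_
  · rw [h v]; exact rimp_self v
  · rw [← h u]; exact rimp_self u

lemma ph_mul_assoc (a b c : A) : a * b * c = a * (b * c) := by
  refine ph_ext fun w => ?_
  rw [mul_rimp, mul_rimp, mul_rimp, mul_rimp]

/-- Powers: `pw x n = xⁿ`. -/
def pw (x : A) : ℕ → A
  | 0 => 1
  | n + 1 => x * pw x n

lemma ph_rimp_pw (x y : A) : ∀ n, rimp (pw x n) y = rimpPow x n y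
  | 0 => ph_one_rimp y
  | n + 1 => by
      show rimp (x * pw x n) y = rimp x (rimpPow x n y)
      rw [mul_rimp, ph_rimp_pw x y n]

lemma ph_pw_add (x : A) (m n : ℕ) : pw x (m + n) = pw x m * pw x n := by
  induction m with
  | zero => simp [pw, one_mul']
  | succ m ih =>
      have : m + 1 + n = (m + n) + 1 := by omega
      rw [this]
      show x * pw x (m + n) = (x * pw x m) * pw x n
      rw [ih, ph_mul_assoc]

end Aux

theorem stmt3 {A : Type u} [PseudoHoop A] :
    IsSimple A ↔ ∀ x y : A, x ≠ 1 → ∃ n : ℕ, rimpPow x n y = 1 := by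
  constructor
  · intro hS x y hx
    set F : Set A := {z : A | ∃ n : ℕ, rimp (pw x n) z = 1} with hFdef
    have hFilt : IsFilter F := by
      refine ⟨⟨1, 0, ph_one_rimp 1⟩, ?_, ?_⟩
      · rintro a b ⟨m, hm⟩ ⟨n, hn⟩
        exact ⟨m + n, by rw [ph_pw_add]; exact ph_mul_le_mul hm hn⟩
      · rintro a b ⟨n, hn⟩ hab
        exact ⟨n, ph_trans hn hab⟩
    have hxF : x ∈ F := by
      refine ⟨1, ?_⟩
      show rimp (x * 1) x = 1
      rw [mul_one']; exact rimp_self x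
    have hnotproper : ¬ IsProper F := by
      intro hP
      have := hS F hFilt hP
      rw [this] at hxF
      exact hx hxF
    have hUniv : F = Set.univ := not_ne_iff.mp hnotproper
    have hyF : y ∈ F := by rw [hUniv]; trivial
    obtain ⟨n, hn⟩ := hyF
    exact ⟨n, by rw [← ph_rimp_pw]; exact hn⟩
  · intro h F hFilt hP
    have h1F : (1 : A) ∈ F := by
      obtain ⟨a, ha⟩ := hFilt.nonempty
      exact hFilt.upward ha (ph_rimp_one a)
    apply Set.eq_of_subset_of_subset
    · intro z hz
      by_contra hz1
      apply hP
      have key : ∀ n, pw z n ∈ F := by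
        intro n
        induction n with
        | zero => exact h1F
        | succ n ih => exact hFilt.mul_mem hz ih
      apply Set.eq_univ_of_forall
      intro y
      obtain ⟨n, hn⟩ := h z y hz1
      refine hFilt.upward (key n) ?_
      show rimp (pw z n) y = 1
      rw [ph_rimp_pw]; exact hn
    · intro z hz
      rw [Set.mem_singleton_iff] at hz
      rw [hz]; exact h1F
end

section
/- Let A be a bounded pseudo-hoop and F a normal filter of A. Then F is an involutive filter if and only if the quotient pseudo-hoop A/F is involutive. -/
universe u v

open PseudoHoop

open BoundedPseudoHoop

section Aux

variable {A : Type u}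

lemma aux_rimp_one_eq [PseudoHoop A] (y : A) : rimp (1 : A) y = y := by
  have S2 : rimp y (rimp (1 : A) y) = 1 := by
    have := PseudoHoop.mul_rimp y (1 : A) y
    rw [PseudoHoop.mul_one'] at this
    rw [← this, PseudoHoop.rimp_self]
  have S3 : rimp (rimp (1 : A) y) y = 1 := by
    have h1 := PseudoHoop.mul_rimp (rimp (1 : A) y) (1 : A) y
    rw [PseudoHoop.mul_one', PseudoHoop.rimp_self] at h1
    exact h1
  have hd := PseudoHoop.div₁ y (rimp (1 : A) y)
  rw [S2, S3, PseudoHoop.one_mul', PseudoHoop.one_mul'] at hd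
  exact hd.symm

lemma aux_rimp_one [PseudoHoop A] (x : A) : rimp x (1 : A) = 1 := by
  have S1 : rimp (rimp (1 : A) x) (1 : A) = 1 := by
    have hd := PseudoHoop.div₁ (1 : A) x
    rw [PseudoHoop.mul_one'] at hd
    rw [hd, PseudoHoop.mul_rimp, PseudoHoop.rimp_self]
  rw [← aux_rimp_one_eq x]
  exact S1

lemma aux_one_mem [PseudoHoop A] {F : Set A} (hF : IsFilter F) : (1 : A) ∈ F := by
  obtain ⟨a, ha⟩ := hF.nonempty
  exact hF.upward ha (aux_rimp_one a)

lemma aux_negr_mul [BoundedPseudoHoop A] (x : A) : rimp x (0 : A) * x = 0 := by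
  have h1 := PseudoHoop.div₁ x (0 : A)
  rw [BoundedPseudoHoop.zero_le, PseudoHoop.one_mul'] at h1
  exact h1

lemma aux_le_negl_negr [BoundedPseudoHoop A] (x : A) :
    limp x (negl (negr x)) = 1 := by
  unfold BoundedPseudoHoop.negl BoundedPseudoHoop.negr
  have h1 := PseudoHoop.mul_limp (rimp x (0 : A)) x (0 : A)
  rw [aux_negr_mul, PseudoHoop.limp_self] at h1
  exact h1.symm

lemma aux_le_negr_negl [BoundedPseudoHoop A] (x : A) :
    rimp x (negr (negl x)) = 1 := by
  unfold BoundedPseudoHoop.negl BoundedPseudoHoop.negr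
  have hmul : x * limp x (0 : A) = 0 := by
    rw [← PseudoHoop.div₂]
    exact aux_negr_mul x
  have h1 := PseudoHoop.mul_rimp x (limp x (0 : A)) (0 : A)
  rw [hmul, PseudoHoop.rimp_self] at h1
  exact h1.symm

end Aux

/-- `F` is involutive iff the quotient `A/F` is involutive; the latter is expressed
via the congruence `Θ_F`: `[x]⁻∼ = [x]` and `[x]∼⁻ = [x]` in `A/F` means
`x⁻∼ Θ_F x` and `x∼⁻ Θ_F x`, where `a Θ_F b` iff `a → b ∈ F` and `b → a ∈ F`. -/
theorem stmt12 {A : Type u} [BoundedPseudoHoop A] (F : Set A)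
    (hF : IsNormalFilter F) :
    IsInvolutiveFilter F ↔ ∀ x : A,
      (rimp (negl (negr x)) x ∈ F ∧ rimp x (negl (negr x)) ∈ F) ∧
      (rimp (negr (negl x)) x ∈ F ∧ rimp x (negr (negl x)) ∈ F) := by
  obtain ⟨hfil, hnorm⟩ := hF
  have h1F : (1 : A) ∈ F := aux_one_mem hfil
  constructor
  · rintro ⟨-, hinv⟩ x
    refine ⟨⟨(hinv x).1, ?_⟩, ⟨(hnorm _ _).mpr (hinv x).2, ?_⟩⟩
    · exact (hnorm _ _).mpr (by rw [aux_le_negl_negr x]; exact h1F)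
    · rw [aux_le_negr_negl x]; exact h1F
  · intro h
    exact ⟨hfil, fun x => ⟨(h x).1.1, (hnorm _ _).mp (h x).2.1⟩⟩
end
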